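/- Let P be an I-prime ideal of a commutative ring R with identity and let J ⊆ P be an ideal of R. Then the image P/J of P in the quotient ring R/J is an Ī-prime ideal of R/J, where Ī = (I + J)/J is the image of I in R/J. -/

import Mathlib

/-- A proper ideal `P` of a commutative ring `R` is `I`-prime if whenever
`a * b ∈ P \ I*P`, then `a ∈ P` or `b ∈ P`. -/
def IsIPrime {R : Type*} [CommRing R] (I P : Ideal R) : Prop :=
  P ≠ ⊤ ∧ ∀ a b : R, a * b ∈ P → a * b ∉ I * P → a ∈ P ∨ b ∈ P

/-- A proper ideal `Q` is weakly prime if whenever `a * b ∈ Q \ {0}`,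
then `a ∈ Q` or `b ∈ Q`. -/
def IsWeaklyPrime {R : Type*} [CommRing R] (Q : Ideal R) : Prop :=
  Q ≠ ⊤ ∧ ∀ a b : R, a * b ∈ Q → a * b ≠ 0 → a ∈ Q ∨ b ∈ Q

theorem stmt_12 {R : Type*} [CommRing R] (I P J : Ideal R) (hJP : J ≤ P)
    (hP : IsIPrime I P) :
    IsIPrime (I.map (Ideal.Quotient.mk J)) (P.map (Ideal.Quotient.mk J)) := by
  obtain ⟨hPtop, hPprime⟩ := hP
  have hsurj : Function.Surjective (Ideal.Quotient.mk J) := Ideal.Quotient.mk_surjective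
  have hcomap : (P.map (Ideal.Quotient.mk J)).comap (Ideal.Quotient.mk J) = P := by
    rw [Ideal.comap_map_of_surjective _ hsurj, ← RingHom.ker_eq_comap_bot, Ideal.mk_ker, sup_eq_left.mpr hJP]
  constructor
  · intro h
    apply hPtop
    rw [← hcomap, h, Ideal.comap_top]
  · intro a b hab hnab
    obtain ⟨x, rfl⟩ := hsurj a
    obtain ⟨y, rfl⟩ := hsurj b
    have hxy : x * y ∈ P := by
      rw [← hcomap]; exact Ideal.mem_comap.mpr (by rw [map_mul]; exact hab)
    have hxy' : x * y ∉ I * P := fun h => hnab (by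
      rw [← Ideal.map_mul]
      exact Ideal.mem_map_of_mem _ h)
    rcases hPprime x y hxy hxy' with h | h
    · exact Or.inl (Ideal.mem_map_of_mem _ h)
    · exact Or.inr (Ideal.mem_map_of_mem _ h)
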